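/- For all words u, v over Σ ∪ {⊤}: u →_F* v if and only if u ∈ E(C_T({v})), i.e., iff there exists n ∈ ℕ such that (u⊤)ⁿu →_T* v. Consequently, C_F = E ∘ C_T as operations on languages. -/

import Mathlib

/-- One rewriting step: `u →_T v` iff `u = l ++ w ++ r` and `v = l ++ ⊤ :: r`. -/
def stepT {α : Type*} (top : α) (u v : List α) : Prop :=
  ∃ l w r : List α, u = l ++ w ++ r ∧ v = l ++ top :: r

/-- `u →_F v` iff `u →_T v`, or `u` is obtained from `v` by collapsing a factor
`w ⊤ w` to `w`. -/
def stepF {α : Type*} (top : α) (u v : List α) : Prop :=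
  stepT top u v ∨ ∃ l w r : List α, u = l ++ w ++ r ∧ v = l ++ w ++ top :: w ++ r

/-- `tpow top w n = (w⊤)ⁿw`. -/
def tpow {α : Type*} (top : α) (w : List α) : ℕ → List α
  | 0 => w
  | n + 1 => w ++ top :: tpow top w n

/-- `C_T(L) = {u | u →_T* v for some v ∈ L}`. -/
def CT {α : Type*} (top : α) (L : Language α) : Language α :=
  {u | ∃ v ∈ L, Relation.ReflTransGen (stepT top) u v}

/-- `C_F(L) = {u | u →_F* v for some v ∈ L}`. -/
def CF {α : Type*} (top : α) (L : Language α) : Language α :=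
  {u | ∃ v ∈ L, Relation.ReflTransGen (stepF top) u v}

/-- `E(L) = {w | ∃ n, (w⊤)ⁿw ∈ L}`. -/
def Elang {α : Type*} (top : α) (L : Language α) : Language α :=
  {w | ∃ n : ℕ, tpow top w n ∈ L}

lemma stepT_context {α : Type*} (top : α) (l r : List α) {a b : List α}
    (h : stepT top a b) : stepT top (l ++ a ++ r) (l ++ b ++ r) := by
  obtain ⟨l', w, r', ha, hb⟩ := h
  exact ⟨l ++ l', w, r' ++ r, by simp [ha], by simp [hb]⟩

lemma rtg_context {α : Type*} (top : α) (l r : List α) {a b : List α}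
    (h : Relation.ReflTransGen (stepT top) a b) :
    Relation.ReflTransGen (stepT top) (l ++ a ++ r) (l ++ b ++ r) := by
  induction h with
  | refl => exact .refl
  | tail _ hstep ih => exact ih.tail (stepT_context top l r hstep)

lemma tpow_add {α : Type*} (top : α) (u : List α) (n m : ℕ) :
    tpow top u (n + m + 1) = tpow top u n ++ top :: tpow top u m := by
  induction n with
  | zero => simp [tpow]
  | succ n ih =>
    have h : n + 1 + m + 1 = (n + m + 1) + 1 := by ring
    rw [h]
    show u ++ top :: tpow top u (n + m + 1) = _
    rw [ih]
    simp [tpow]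

lemma stepF_tpow {α : Type*} (top : α) (u : List α) (n : ℕ) :
    stepF top (tpow top u n) (tpow top u (n + 1)) := by
  cases n with
  | zero => exact Or.inr ⟨[], u, [], by simp [tpow], by simp [tpow]⟩
  | succ n => exact Or.inr ⟨[], u, top :: tpow top u n, by simp [tpow], by simp [tpow]⟩

lemma rtg_to_tpow {α : Type*} (top : α) (u : List α) (n : ℕ) :
    Relation.ReflTransGen (stepF top) u (tpow top u n) := by
  induction n with
  | zero => exact .refl
  | succ n ih => exact ih.tail (stepF_tpow top u n)

lemma main_iff {α : Type*} (top : α) (u v : List α) :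
    Relation.ReflTransGen (stepF top) u v ↔
      ∃ n : ℕ, Relation.ReflTransGen (stepT top) (tpow top u n) v := by
  constructor
  · intro h
    induction h with
    | refl => exact ⟨0, .refl⟩
    | tail _ hstep ih =>
      obtain ⟨n, hn⟩ := ih
      rcases hstep with hT | ⟨l, x, r, hb, hc⟩
      · exact ⟨n, hn.tail hT⟩
      · refine ⟨n + n + 1, ?_⟩
        rw [tpow_add]
        subst hb hc
        have h1 : Relation.ReflTransGen (stepT top)
            (tpow top u n ++ top :: tpow top u n)
            ((l ++ x ++ r) ++ top :: tpow top u n) := by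
          simpa using rtg_context top [] (top :: tpow top u n) hn
        have h2 : Relation.ReflTransGen (stepT top)
            ((l ++ x ++ r) ++ top :: tpow top u n)
            ((l ++ x ++ r) ++ top :: (l ++ x ++ r)) := by
          simpa using rtg_context top ((l ++ x ++ r) ++ [top]) [] hn
        have h3 : stepT top ((l ++ x ++ r) ++ top :: (l ++ x ++ r))
            (l ++ x ++ top :: x ++ r) :=
          ⟨l ++ x, r ++ top :: l, x ++ r, by simp, by simp⟩
        exact ((h1.trans h2).tail h3)
  · rintro ⟨n, hn⟩
    exact (rtg_to_tpow top u n).trans (Relation.ReflTransGen.mono (fun a b h => Or.inl h) _ _ hn)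

/-- `u →_F* v` iff `(u⊤)ⁿu →_T* v` for some `n`; consequently `C_F = E ∘ C_T`. -/
theorem CF_eq_E_comp_CT {α : Type*} (top : α) :
    (∀ u v : List α, Relation.ReflTransGen (stepF top) u v ↔
      ∃ n : ℕ, Relation.ReflTransGen (stepT top) (tpow top u n) v) ∧
    (∀ L : Language α, CF top L = Elang top (CT top L)) := by
  refine ⟨main_iff top, fun L => ?_⟩
  ext u
  constructor
  · rintro ⟨v, hv, h⟩
    obtain ⟨n, hn⟩ := (main_iff top u v).1 h
    exact ⟨n, v, hv, hn⟩
  · rintro ⟨n, v, hv, hn⟩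
    exact ⟨v, hv, (main_iff top u v).2 ⟨n, hn⟩⟩
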